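/- Let f, n, m be natural numbers with n > 3f and m ≥ n − f. Let P be a multiset of real numbers with card P = n and let U be a sub-multiset of P with card U = m. Then the range of the symmetrically trimmed correct positions is contained in the range of the symmetrically trimmed observed positions: P_(f+1) ≤ U_(f+1) and U_(m−f) ≤ P_(n−f), i.e. [U_(f+1), U_(m−f)] ⊆ [P_(f+1), P_(n−f)]. -/

import Mathlib

/-- The k-th smallest element (1-indexed, counted with multiplicity) of a
multiset of real numbers. -/
noncomputable def nth (S : Multiset ℝ) (k : ℕ) : ℝ :=
  (S.sort (· ≤ ·)).getD (k - 1) 0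

/-- The smallest element of a (nonempty) multiset of reals. -/
noncomputable def mmin (S : Multiset ℝ) : ℝ := nth S 1

/-- The largest element of a (nonempty) multiset of reals. -/
noncomputable def mmax (S : Multiset ℝ) : ℝ := nth S S.card

/-- The diameter of a (nonempty) multiset of reals. -/
noncomputable def mdiam (S : Multiset ℝ) : ℝ := mmax S - mmin S

lemma fin_emb_add {a b : ℕ} (g : Fin a ↪o Fin b) (i : Fin a) (k : ℕ)
    (h : (i : ℕ) + k < a) : (g i : ℕ) + k ≤ (g ⟨i + k, h⟩ : ℕ) := by
  induction k with
  | zero => simp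
  | succ k ih =>
    have h' : (i : ℕ) + k < a := by omega
    have := ih h'
    have hlt : g ⟨i + k, h'⟩ < g ⟨i + (k+1), h⟩ := by
      apply g.strictMono
      simp [Fin.lt_def]
    have : (g ⟨i + k, h'⟩ : ℕ) < (g ⟨i + (k+1), h⟩ : ℕ) := hlt
    omega

lemma key {u p : List ℝ} (hp : p.Pairwise (· ≤ ·)) (hsub : List.Sublist u p)
    (i : ℕ) (hi : i < u.length) :
    p.getD i 0 ≤ u.getD i 0 ∧ u.getD i 0 ≤ p.getD (i + (p.length - u.length)) 0 := by
  obtain ⟨g, hg⟩ := List.sublist_iff_exists_fin_orderEmbedding_get_eq.mp hsub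
  have hlen : u.length ≤ p.length := hsub.length_le
  set I : Fin u.length := ⟨i, hi⟩
  have hiu : u.getD i 0 = u.get I := List.getD_eq_getElem _ _ hi
  -- lower bound: i ≤ g I
  have h1 : (i : ℕ) ≤ (g I : ℕ) := by
    have h' : ((⟨0, by omega⟩ : Fin u.length) : ℕ) + i < u.length := by simpa using hi
    have hle := fin_emb_add g ⟨0, by omega⟩ i h'
    have he : (⟨((⟨0, by omega⟩ : Fin u.length) : ℕ) + i, h'⟩ : Fin u.length) = I :=
      Fin.ext (by simp [I])
    rw [he] at hle
    omega
  -- upper bound: g I ≤ i + (p.length - u.length)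
  have h2 : (g I : ℕ) ≤ i + (p.length - u.length) := by
    have hlast : (i : ℕ) + (u.length - 1 - i) < u.length := by omega
    have := fin_emb_add g I (u.length - 1 - i) hlast
    have hb : (g ⟨i + (u.length - 1 - i), hlast⟩ : ℕ) < p.length := (g _).isLt
    omega
  have hgI : (g I : ℕ) < p.length := (g I).isLt
  constructor
  · rw [hiu, hg I, List.getD_eq_getElem _ _ (by omega : i < p.length)]
    exact hp.rel_get_of_le (by simpa [Fin.le_def] using h1)
  · rw [hiu, hg I, List.getD_eq_getElem _ _ (by omega : i + (p.length - u.length) < p.length)]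
    exact hp.rel_get_of_le (by simpa [Fin.le_def] using h2)

theorem stmt5 (f n m : ℕ) (P U : Multiset ℝ)
    (hn : n > 3 * f) (hm : m ≥ n - f)
    (hP : Multiset.card P = n) (hU : U ≤ P) (hUm : Multiset.card U = m) :
    nth P (f + 1) ≤ nth U (f + 1) ∧ nth U (m - f) ≤ nth P (n - f) := by
  set u := U.sort (· ≤ ·) with hu
  set p := P.sort (· ≤ ·) with hpdef
  have hps : p.Pairwise (· ≤ ·) := P.pairwise_sort _
  have hus : u.Pairwise (· ≤ ·) := U.pairwise_sort _
  have hsubp : List.Subperm u p := by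
    rw [← Multiset.coe_le, Multiset.sort_eq, Multiset.sort_eq]; exact hU
  have hsub : List.Sublist u p := List.sublist_of_subperm_of_sortedLE hsubp hus.sortedLE hps.sortedLE
  have hul : u.length = m := by rw [hu, Multiset.length_sort, hUm]
  have hpl : p.length = n := by rw [hpdef, Multiset.length_sort, hP]
  have hmn : m ≤ n := by rw [← hul, ← hpl]; exact hsub.length_le
  constructor
  · have := (key hps hsub f (by omega)).1
    simpa [nth] using this
  · have := (key hps hsub (m - f - 1) (by omega)).2
    have he : m - f - 1 + (p.length - u.length) = n - f - 1 := by
      rw [hul, hpl]; omega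
    rw [he] at this
    simpa [nth] using this
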